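/- Suppose (X,σ) is a minimal subshift over a finite alphabet and w ∈ L(X). Then the subgroup G_w of Aut(X) generated by S_w := {φ ∈ Aut_{⌊|w|/2⌋}(X) : φ([w]_0^+) ⊆ [w]_0^+} is finite. -/

import Mathlib

open Filter Topology

/-- The left shift `σ` on bi-infinite sequences over the alphabet `A`. -/
def shiftMap (A : Type*) : (ℤ → A) → (ℤ → A) := fun x i => x (i + 1)

/-- A subshift: a nonempty, closed, shift-invariant subset of `A^ℤ`. -/
def IsSubshift {A : Type*} [TopologicalSpace A] (X : Set (ℤ → A)) : Prop :=
  X.Nonempty ∧ IsClosed X ∧ shiftMap A '' X = X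

/-- A minimal subshift: a subshift with no nonempty proper closed shift-invariant subset. -/
def IsMinimalSubshift {A : Type*} [TopologicalSpace A] (X : Set (ℤ → A)) : Prop :=
  IsSubshift X ∧
    ∀ Y : Set (ℤ → A), Y ⊆ X → Y.Nonempty → IsClosed Y → shiftMap A '' Y = Y → Y = X

/-- The words of length `n` in the language of `X`. -/
def Lang {A : Type*} (X : Set (ℤ → A)) (n : ℕ) : Set (Fin n → A) :=
  {w | ∃ x ∈ X, ∀ i : Fin n, x (i.val : ℤ) = w i}

/-- The complexity function `P_X(n)`, the number of words of length `n` in `X`. -/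
noncomputable def complexity {A : Type*} (X : Set (ℤ → A)) (n : ℕ) : ℕ :=
  (Lang X n).ncard

/-- The one-sided cylinder set `[w]_0^+` of the word `w` in `X`. -/
def cylinder {A : Type*} (X : Set (ℤ → A)) {n : ℕ} (w : Fin n → A) : Set ↥X :=
  {x | ∀ i : Fin n, (x : ℤ → A) (i.val : ℤ) = w i}

/-- `φ` commutes with the shift on `X`. -/
def CommutesWithShift {A : Type*} (X : Set (ℤ → A)) (φ : ↥X → ↥X) : Prop :=
  ∀ x y : ↥X, shiftMap A (x : ℤ → A) = (y : ℤ → A) →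
    shiftMap A ((φ x : ℤ → A)) = ((φ y : ℤ → A))

/-- The automorphism group of the subshift `(X, σ)`: homeomorphisms of `X`
commuting with the shift, as a subgroup of the permutation group of `X`. -/
def Aut {A : Type*} [TopologicalSpace A] (X : Set (ℤ → A)) : Subgroup (Equiv.Perm ↥X) where
  carrier := {φ | Continuous ⇑φ ∧ Continuous ⇑φ.symm ∧
    CommutesWithShift X ⇑φ ∧ CommutesWithShift X ⇑φ.symm}
  one_mem' := by
    refine ⟨?_, ?_, ?_, ?_⟩
    · simpa using continuous_id
    · exact continuous_id
    · intro x y h; simpa using h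
    · intro x y h; exact h
  mul_mem' := by
    rintro φ ψ ⟨hφ1, hφ2, hφ3, hφ4⟩ ⟨hψ1, hψ2, hψ3, hψ4⟩
    refine ⟨?_, ?_, ?_, ?_⟩
    · have h : ⇑(φ * ψ) = ⇑φ ∘ ⇑ψ := rfl
      rw [h]; exact hφ1.comp hψ1
    · have h : ⇑(φ * ψ).symm = ⇑ψ.symm ∘ ⇑φ.symm := rfl
      rw [h]; exact hψ2.comp hφ2
    · intro x y h
      exact hφ3 (ψ x) (ψ y) (hψ3 x y h)
    · intro x y h
      exact hψ4 (φ.symm x) (φ.symm y) (hφ4 x y h)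
  inv_mem' := by
    rintro φ ⟨h1, h2, h3, h4⟩
    exact ⟨h2, h1, h4, h3⟩

/-- `φ` is determined at the coordinate `0` by the window `[-R, R]`, i.e. `φ` is a
block code of range `R`. -/
def IsBlockCode {A : Type*} (X : Set (ℤ → A)) (φ : ↥X → ↥X) (R : ℕ) : Prop :=
  ∀ x y : ↥X, (∀ i : ℤ, -(R : ℤ) ≤ i → i ≤ (R : ℤ) → (x : ℤ → A) i = (y : ℤ → A) i) →
    (φ x : ℤ → A) 0 = (φ y : ℤ → A) 0

/-- `Aut_R(X)`: automorphisms `φ` such that both `φ` and `φ⁻¹` are block codes of range `R`. -/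
def AutR {A : Type*} [TopologicalSpace A] (X : Set (ℤ → A)) (R : ℕ) : Set (Equiv.Perm ↥X) :=
  {φ | φ ∈ Aut X ∧ IsBlockCode X ⇑φ R ∧ IsBlockCode X ⇑φ.symm R}

/-- `w` extends uniquely `k` times to the right: there is exactly one word of length
`n + k` in the language whose first `n` letters are `w`. -/
def ExtendsUniquelyRight {A : Type*} (X : Set (ℤ → A)) {n : ℕ} (w : Fin n → A) (k : ℕ) : Prop :=
  ∃! u : Fin (n + k) → A, u ∈ Lang X (n + k) ∧ ∀ i : Fin n, u (Fin.castAdd k i) = w i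

/-- `w` extends uniquely `k` times to the left: there is exactly one word of length
`n + k` in the language whose last `n` letters are `w`. -/
def ExtendsUniquelyLeft {A : Type*} (X : Set (ℤ → A)) {n : ℕ} (w : Fin n → A) (k : ℕ) : Prop :=
  ∃! u : Fin (n + k) → A, u ∈ Lang X (n + k) ∧
    ∀ i : Fin n, u (Fin.cast (Nat.add_comm k n) (Fin.natAdd k i)) = w i

/-- The Følner ratio `|F △ gF| / |F|`. -/
noncomputable def folnerRatio {G : Type*} [Group G] (F : Finset G) (g : G) : ℝ :=
  letI := Classical.decEq G
  ((symmDiff F (F.image (fun h => g * h))).card : ℝ) / (F.card : ℝ)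

/-- A countable discrete group is amenable if it admits a Følner sequence. -/
def IsAmenableGrp (G : Type*) [Group G] : Prop :=
  ∃ F : ℕ → Finset G,
    (∀ g : G, ∀ᶠ k in atTop, g ∈ F k) ∧
    (∀ g : G, Tendsto (fun k => folnerRatio (F k) g) atTop (𝓝 0))

/-- `S` is a finite symmetric generating set of `G`. -/
def IsSymmGen {G : Type*} [Group G] (S : Finset G) : Prop :=
  (∀ s ∈ S, s⁻¹ ∈ S) ∧ Subgroup.closure (S : Set G) = ⊤

/-- The growth function `γ_G^S(n)`: the number of elements of `G` expressible as a
product of at most `n` elements of `S`. -/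
noncomputable def growthFn {G : Type*} [Group G] (S : Finset G) (n : ℕ) : ℕ :=
  Nat.card {g : G // ∃ l : List G, l.length ≤ n ∧ (∀ x ∈ l, x ∈ S) ∧ l.prod = g}

/-- `G` has subexponential growth. -/
def HasSubexpGrowth (G : Type*) [Group G] : Prop :=
  ∀ S : Finset G, IsSymmGen S →
    Tendsto (fun n : ℕ => Real.log (growthFn S n) / (n : ℝ)) atTop (𝓝 0)

set_option linter.unusedSectionVars false

namespace Stmt13Aux

variable {A : Type*}

/-- The shift as a bijection of the full space. -/
def sE (A : Type*) : Equiv.Perm (ℤ → A) where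
  toFun x i := x (i + 1)
  invFun x i := x (i - 1)
  left_inv x := funext fun i => by simp
  right_inv x := funext fun i => by simp

lemma shiftMap_eq : shiftMap A = ⇑(sE A) := rfl

lemma sE_zpow_apply (k : ℤ) (x : ℤ → A) (i : ℤ) : (sE A ^ k) x i = x (i + k) := by
  induction k using Int.induction_on generalizing x with
  | zero => simp
  | succ m ih =>
      rw [zpow_add_one, Equiv.Perm.mul_apply, ih]
      show x (i + m + 1) = _
      congr 1; ring
  | pred m ih =>
      rw [zpow_sub_one, Equiv.Perm.mul_apply, ih]
      show x (i + -m - 1) = _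
      congr 1; ring

variable {X : Set (ℤ → A)}

lemma sE_mem (h : shiftMap A '' X = X) {x : ℤ → A} (hx : x ∈ X) : sE A x ∈ X := by
  rw [← h]; exact ⟨x, hx, rfl⟩

lemma sE_symm_mem (h : shiftMap A '' X = X) {x : ℤ → A} (hx : x ∈ X) : (sE A).symm x ∈ X := by
  rw [← h] at hx
  obtain ⟨y, hy, rfl⟩ := hx
  show (sE A).symm (sE A y) ∈ X
  simpa using hy

/-- The shift as a permutation of the subshift. -/
def sX (h : shiftMap A '' X = X) : Equiv.Perm ↥X where
  toFun z := ⟨sE A ↑z, sE_mem h z.2⟩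
  invFun z := ⟨(sE A).symm ↑z, sE_symm_mem h z.2⟩
  left_inv z := Subtype.ext (by simp)
  right_inv z := Subtype.ext (by simp)

lemma sX_coe (h : shiftMap A '' X = X) (z : ↥X) : ((sX h z : ↥X) : ℤ → A) = sE A ↑z := rfl

lemma sX_zpow_coe (h : shiftMap A '' X = X) (k : ℤ) (z : ↥X) :
    (((sX h ^ k) z : ↥X) : ℤ → A) = (sE A ^ k) ↑z := by
  induction k using Int.induction_on generalizing z with
  | zero => simp
  | succ m ih =>
      rw [zpow_add_one, zpow_add_one, Equiv.Perm.mul_apply, Equiv.Perm.mul_apply, ih]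
      rfl
  | pred m ih =>
      rw [zpow_sub_one, zpow_sub_one, Equiv.Perm.mul_apply, Equiv.Perm.mul_apply, ih]
      rfl

lemma sX_zpow_apply (h : shiftMap A '' X = X) (k : ℤ) (z : ↥X) (i : ℤ) :
    (((sX h ^ k) z : ↥X) : ℤ → A) i = (z : ℤ → A) (i + k) := by
  rw [sX_zpow_coe, sE_zpow_apply]

section Topo

variable [TopologicalSpace A]

lemma cont_sE : Continuous (⇑(sE A)) :=
  continuous_pi fun i => continuous_apply (i + 1)

lemma cont_sE_symm : Continuous (⇑(sE A).symm) :=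
  continuous_pi fun i => continuous_apply (i - 1)

lemma cont_sX (h : shiftMap A '' X = X) : Continuous (⇑(sX h)) :=
  Continuous.subtype_mk (cont_sE.comp continuous_subtype_val) _

lemma cont_sX_inv (h : shiftMap A '' X = X) : Continuous (⇑(sX h)⁻¹) :=
  Continuous.subtype_mk (cont_sE_symm.comp continuous_subtype_val) _

lemma cont_sX_zpow (h : shiftMap A '' X = X) (k : ℤ) : Continuous (⇑(sX h ^ k)) := by
  induction k using Int.induction_on with
  | zero => simpa using continuous_id
  | succ m ih =>
      have : ⇑(sX h ^ ((m : ℤ) + 1)) = ⇑(sX h ^ (m : ℤ)) ∘ ⇑(sX h) := by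
        funext z; rw [zpow_add_one]; rfl
      rw [this]; exact ih.comp (cont_sX h)
  | pred m ih =>
      have : ⇑(sX h ^ (-(m : ℤ) - 1)) = ⇑(sX h ^ (-(m : ℤ))) ∘ ⇑(sX h)⁻¹ := by
        funext z; rw [zpow_sub_one]; rfl
      rw [this]; exact ih.comp (cont_sX_inv h)

end Topo

/-- `w` occurs in `z` at position `j`. -/
def OccAt {n : ℕ} (w : Fin n → A) (z : ℤ → A) (j : ℤ) : Prop :=
  ∀ t : Fin n, z ((t.val : ℤ) + j) = w t

lemma occAt_shift {n : ℕ} (w : Fin n → A) (h : shiftMap A '' X = X) (a : ℤ) (z : ↥X) (j : ℤ) :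
    OccAt w (((sX h ^ a) z : ↥X) : ℤ → A) j ↔ OccAt w (z : ℤ → A) (j + a) := by
  unfold OccAt
  refine forall_congr' fun t => ?_
  rw [sX_zpow_apply, add_assoc]

lemma mem_cylinder_iff {n : ℕ} (w : Fin n → A) (z : ↥X) :
    z ∈ cylinder X w ↔ OccAt w (z : ℤ → A) 0 := by
  unfold cylinder OccAt
  refine forall_congr' fun t => ?_
  rw [add_zero]

lemma shifted_mem_cylinder_iff {n : ℕ} (w : Fin n → A) (h : shiftMap A '' X = X)
    (z : ↥X) (j : ℤ) : (sX h ^ j) z ∈ cylinder X w ↔ OccAt w (z : ℤ → A) j := by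
  rw [mem_cylinder_iff, occAt_shift, zero_add]

section Synd

variable [Fintype A] [TopologicalSpace A] [DiscreteTopology A]

lemma synd (hX : IsMinimalSubshift X) (h : shiftMap A '' X = X)
    (V : Set ↥X) (hVo : IsOpen V) (hVne : V.Nonempty) :
    ∃ K : ℕ, ∀ z : ↥X, ∀ j : ℤ, ∃ i : ℤ, j ≤ i ∧ i ≤ j + K ∧ (sX h ^ i) z ∈ V := by
  haveI : CompactSpace ↥X := isCompact_iff_compactSpace.mp hX.1.2.1.isCompact
  -- Step 1 : every orbit visits V
  have hstep1 : ∀ z : ↥X, ∃ k : ℤ, (sX h ^ k) z ∈ V := by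
    intro z
    by_contra hc
    push_neg at hc
    let W : Set ↥X := ⋂ k : ℤ, (⇑(sX h ^ k)) ⁻¹' Vᶜ
    have hzW : z ∈ W := Set.mem_iInter.mpr fun k => hc k
    have hWclosed : IsClosed W :=
      isClosed_iInter fun k => (hVo.isClosed_compl).preimage (cont_sX_zpow h k)
    set Y : Set (ℤ → A) := Subtype.val '' W with hYdef
    have hYX : Y ⊆ X := Subtype.coe_image_subset X W
    have hYne : Y.Nonempty := ⟨↑z, z, hzW, rfl⟩
    have hYclosed : IsClosed Y :=
      ((hWclosed.isCompact).image continuous_subtype_val).isClosed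
    have hYinv : shiftMap A '' Y = Y := by
      apply Set.Subset.antisymm
      · rintro - ⟨-, ⟨u, hu, rfl⟩, rfl⟩
        refine ⟨sX h u, ?_, rfl⟩
        refine Set.mem_iInter.mpr fun k => ?_
        have : (sX h ^ k) (sX h u) = (sX h ^ (k + 1)) u := by
          rw [zpow_add_one, Equiv.Perm.mul_apply]
        simp only [Set.mem_preimage, this]
        exact Set.mem_iInter.mp hu (k + 1)
      · rintro - ⟨u, hu, rfl⟩
        refine ⟨↑((sX h)⁻¹ u), ⟨(sX h)⁻¹ u, ?_, rfl⟩, ?_⟩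
        · refine Set.mem_iInter.mpr fun k => ?_
          have : (sX h ^ k) ((sX h)⁻¹ u) = (sX h ^ (k - 1)) u := by
            rw [zpow_sub_one, Equiv.Perm.mul_apply]
          simp only [Set.mem_preimage, this]
          exact Set.mem_iInter.mp hu (k - 1)
        · show ↑(sX h ((sX h)⁻¹ u)) = (u : ℤ → A)
          rw [← Equiv.Perm.mul_apply, mul_inv_cancel, Equiv.Perm.one_apply]
    have hYeq : Y = X := hX.2 Y hYX hYne hYclosed hYinv
    obtain ⟨v, hv⟩ := hVne
    have : (v : ℤ → A) ∈ Y := by rw [hYeq]; exact v.2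
    obtain ⟨u, hu, huv⟩ := this
    have huv' : u = v := Subtype.ext huv
    subst huv'
    have := Set.mem_iInter.mp hu 0
    simp only [zpow_zero, Set.mem_preimage, Equiv.Perm.coe_one, id_eq] at this
    exact this hv
  -- Step 2 : compactness gives a uniform bound
  have hcover : (Set.univ : Set ↥X) ⊆ ⋃ k : ℤ, (⇑(sX h ^ k)) ⁻¹' V := by
    intro z _
    exact Set.mem_iUnion.mpr (hstep1 z)
  obtain ⟨t, ht⟩ := isCompact_univ.elim_finite_subcover
    (fun k : ℤ => (⇑(sX h ^ k)) ⁻¹' V) (fun k => hVo.preimage (cont_sX_zpow h k)) hcover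
  set K₀ : ℕ := t.sup Int.natAbs with hK₀
  refine ⟨2 * K₀, fun z j => ?_⟩
  have := ht (Set.mem_univ ((sX h ^ (j + (K₀ : ℤ))) z))
  rw [Set.mem_iUnion₂] at this
  obtain ⟨k, hk, hkV⟩ := this
  have hcomp : (sX h ^ k) ((sX h ^ (j + (K₀ : ℤ))) z) = (sX h ^ (k + (j + (K₀ : ℤ)))) z := by
    simp only [zpow_add, Equiv.Perm.mul_apply]
  rw [Set.mem_preimage, hcomp] at hkV
  have hkb : (k.natAbs : ℤ) ≤ (K₀ : ℤ) := by exact_mod_cast Finset.le_sup hk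
  refine ⟨k + (j + (K₀ : ℤ)), ?_, ?_, hkV⟩
  · omega
  · push_cast
    omega

end Synd

section Comm

variable [TopologicalSpace A]

lemma commute_sX (h : shiftMap A '' X = X) {φ : Equiv.Perm ↥X}
    (hφ : CommutesWithShift X ⇑φ) : Commute φ (sX h) := by
  apply Equiv.ext
  intro z
  have h1 : shiftMap A (z : ℤ → A) = ((sX h z : ↥X) : ℤ → A) := rfl
  have h2 := hφ z (sX h z) h1
  have h3 : shiftMap A ((φ z : ↥X) : ℤ → A) = ((sX h (φ z) : ↥X) : ℤ → A) := rfl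
  rw [h3] at h2
  exact (Subtype.ext h2).symm

lemma phi_sX_zpow (h : shiftMap A '' X = X) {φ : Equiv.Perm ↥X}
    (hφ : CommutesWithShift X ⇑φ) (k : ℤ) (z : ↥X) :
    φ ((sX h ^ k) z) = (sX h ^ k) (φ z) := by
  have := (commute_sX h hφ).zpow_right k
  have h2 := DFunLike.congr_fun this z
  simpa [Equiv.Perm.mul_apply] using h2

/-- Block code determinacy at an arbitrary coordinate. -/
lemma blockcode_at (h : shiftMap A '' X = X) {φ : Equiv.Perm ↥X} {R : ℕ}
    (hφ : CommutesWithShift X ⇑φ) (hbc : IsBlockCode X ⇑φ R) (x y : ↥X) (i : ℤ)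
    (hagree : ∀ m : ℤ, i - R ≤ m → m ≤ i + R → (x : ℤ → A) m = (y : ℤ → A) m) :
    ((φ x : ↥X) : ℤ → A) i = ((φ y : ↥X) : ℤ → A) i := by
  have key := hbc ((sX h ^ i) x) ((sX h ^ i) y) ?_
  · have e1 : ((φ ((sX h ^ i) x) : ↥X) : ℤ → A) 0 = ((φ x : ↥X) : ℤ → A) i := by
      rw [phi_sX_zpow h hφ, sX_zpow_apply, zero_add]
    have e2 : ((φ ((sX h ^ i) y) : ↥X) : ℤ → A) 0 = ((φ y : ↥X) : ℤ → A) i := by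
      rw [phi_sX_zpow h hφ, sX_zpow_apply, zero_add]
    rw [← e1, ← e2, key]
  · intro m hm1 hm2
    rw [sX_zpow_apply, sX_zpow_apply]
    exact hagree (m + i) (by omega) (by omega)

end Comm

section Main

variable [Fintype A] [TopologicalSpace A] [DiscreteTopology A] {n : ℕ}

lemma aut_unpack {φ : Equiv.Perm ↥X} (hφ : φ ∈ Aut X) :
    Continuous ⇑φ ∧ Continuous ⇑φ.symm ∧ CommutesWithShift X ⇑φ ∧ CommutesWithShift X ⇑φ.symm :=
  hφ

lemma cyl_open (w : Fin n → A) : IsOpen (cylinder X w) := by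
  have he : cylinder X w
      = ⋂ t : Fin n, (fun z : ↥X => (z : ℤ → A) (t.val : ℤ)) ⁻¹' {w t} := by
    ext z
    simp [cylinder, Set.mem_iInter]
  rw [he]
  exact isOpen_iInter_of_finite fun t =>
    (isOpen_discrete _).preimage ((continuous_apply ((t.val : ℤ))).comp continuous_subtype_val)

lemma cyl_closed (w : Fin n → A) : IsClosed (cylinder X w) := by
  have he : cylinder X w
      = ⋂ t : Fin n, (fun z : ↥X => (z : ℤ → A) (t.val : ℤ)) ⁻¹' {w t} := by
    ext z
    simp [cylinder, Set.mem_iInter]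
  rw [he]
  exact isClosed_iInter fun t =>
    (isClosed_discrete _).preimage ((continuous_apply ((t.val : ℤ))).comp continuous_subtype_val)

lemma occ_fwd (h : shiftMap A '' X = X) {w : Fin n → A} {φ : Equiv.Perm ↥X}
    (hcomm : CommutesWithShift X ⇑φ)
    (hmap : Set.MapsTo ⇑φ (cylinder X w) (cylinder X w))
    {z : ↥X} {j : ℤ} (hj : OccAt w (↑z) j) : OccAt w (↑(φ z)) j := by
  rw [← shifted_mem_cylinder_iff w h] at hj ⊢
  have h2 := hmap hj
  rwa [phi_sX_zpow h hcomm] at h2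

lemma occ_bwd (hX : IsMinimalSubshift X) (h : shiftMap A '' X = X) {w : Fin n → A}
    {φ : Equiv.Perm ↥X} (hcont : Continuous ⇑φ) (hcomm : CommutesWithShift X ⇑φ)
    (hmap : Set.MapsTo ⇑φ (cylinder X w) (cylinder X w)) :
    ∀ z : ↥X, ∀ j : ℤ, OccAt w (↑(φ z)) j → OccAt w (↑z) j := by
  classical
  by_contra hc
  push_neg at hc
  obtain ⟨z₀, j₀, hocc, hnot⟩ := hc
  have hVo : IsOpen ((⇑φ) ⁻¹' (cylinder X w) ∩ (cylinder X w)ᶜ) :=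
    ((cyl_open w).preimage hcont).inter (cyl_closed w).isOpen_compl
  have hVne : ((⇑φ) ⁻¹' (cylinder X w) ∩ (cylinder X w)ᶜ).Nonempty := by
    refine ⟨(sX h ^ j₀) z₀, ?_, ?_⟩
    · show φ ((sX h ^ j₀) z₀) ∈ cylinder X w
      rw [phi_sX_zpow h hcomm]
      exact (shifted_mem_cylinder_iff w h (φ z₀) j₀).mpr hocc
    · intro hmem
      exact hnot ((shifted_mem_cylinder_iff w h z₀ j₀).mp hmem)
  obtain ⟨M, hM⟩ := synd hX h _ hVo hVne
  let N : ↥X → ℕ := fun z =>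
    ((Finset.Ico (0:ℤ) ((M:ℤ)+1)).filter (fun i => OccAt w (↑z) i)).card
  have hNle : ∀ z, N z ≤ M + 1 := by
    intro z
    have h1 := Finset.card_filter_le (Finset.Ico (0:ℤ) ((M:ℤ)+1)) (fun i => OccAt w (↑z) i)
    have h2 : (Finset.Ico (0:ℤ) ((M:ℤ)+1)).card = M + 1 := by
      rw [Int.card_Ico]
      omega
    have h3 : N z = ((Finset.Ico (0:ℤ) ((M:ℤ)+1)).filter (fun i => OccAt w (↑z) i)).card := rfl
    omega
  have hkey : ∀ z : ↥X, N z + 1 ≤ N (φ z) := by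
    intro z
    obtain ⟨i, hi0, hiM, hiV⟩ := hM z 0
    have hiOccφ : OccAt w (↑(φ z)) i := by
      have h1 : φ ((sX h ^ i) z) ∈ cylinder X w := hiV.1
      rw [phi_sX_zpow h hcomm] at h1
      exact (shifted_mem_cylinder_iff w h (φ z) i).mp h1
    have hiNot : ¬ OccAt w (↑z) i := fun hoc =>
      hiV.2 ((shifted_mem_cylinder_iff w h z i).mpr hoc)
    have hs : (Finset.Ico (0:ℤ) ((M:ℤ)+1)).filter (fun i => OccAt w (↑z) i)
        ⊆ (Finset.Ico (0:ℤ) ((M:ℤ)+1)).filter (fun i => OccAt w (↑(φ z)) i) := by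
      refine Finset.monotone_filter_right _ ?_
      intro i _ hi
      exact occ_fwd h hcomm hmap hi
    have hss := (Finset.ssubset_iff_of_subset hs).mpr
      ⟨i, Finset.mem_filter.mpr ⟨Finset.mem_Ico.mpr ⟨hi0, by omega⟩, hiOccφ⟩,
        fun hmem => hiNot (Finset.mem_filter.mp hmem).2⟩
    exact Nat.succ_le_of_lt (Finset.card_lt_card hss)
  have hiter : ∀ k : ℕ, k ≤ N ((⇑φ)^[k] z₀) := by
    intro k
    induction k with
    | zero => exact Nat.zero_le _
    | succ m ih =>
        rw [Function.iterate_succ_apply']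
        have := hkey ((⇑φ)^[m] z₀)
        omega
  have h1 := hiter (M + 2)
  have h2 := hNle ((⇑φ)^[M+2] z₀)
  omega

end Main

section Pred

variable [Fintype A] [TopologicalSpace A] [DiscreteTopology A] {n : ℕ}

lemma occ_eval {w : Fin n → A} {z : ℤ → A} {b : ℤ} (hz : OccAt w z b) {m : ℤ}
    (h1 : b ≤ m) (h2 : m < b + n) : z m = w ⟨(m - b).toNat, by omega⟩ := by
  have ht := hz ⟨(m - b).toNat, by omega⟩
  have hc : (((⟨(m - b).toNat, by omega⟩ : Fin n).val : ℤ)) + b = m := by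
    show (((m - b).toNat : ℤ)) + b = m
    omega
  rw [hc] at ht
  exact ht

lemma occ_transfer {w : Fin n → A} {x y : ℤ → A} {a b c : ℤ} (hc : OccAt w x c)
    (hac : a ≤ c) (hcb : c ≤ b)
    (hagree : ∀ m : ℤ, a ≤ m → m < b + n → x m = y m) : OccAt w y c := by
  intro t
  have ht1 : (0:ℤ) ≤ (t.val : ℤ) := by positivity
  have ht2 : ((t.val : ℤ)) < (n : ℤ) := by exact_mod_cast t.isLt
  rw [← hagree ((t.val : ℤ) + c) (by omega) (by omega)]
  exact hc t

/-- The key invariant preserved under products of elements of `S_w`. -/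
def P {n : ℕ} (w : Fin n → A) (X : Set (ℤ → A)) (g : Equiv.Perm ↥X) : Prop :=
  (∀ z : ↥X, ∀ j : ℤ, OccAt w (↑z) j ↔ OccAt w (↑(g z)) j) ∧
  (∀ x y : ↥X, ∀ a b : ℤ, OccAt w (↑x) a → OccAt w (↑x) b → a < b →
    (∀ m : ℤ, a ≤ m → m < b + n → (x : ℤ → A) m = (y : ℤ → A) m) →
    ∀ i : ℤ, a ≤ i → i < b → ((g x : ↥X) : ℤ → A) i = ((g y : ↥X) : ℤ → A) i)

lemma P_one {w : Fin n → A} : P w X 1 := by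
  constructor
  · intro z j
    simp
  · intro x y a b hxa hxb hab hagree i hia hib
    have hn : (0:ℤ) ≤ (n:ℤ) := by positivity
    simpa using hagree i hia (by omega)

lemma P_mul {w : Fin n → A} {g h : Equiv.Perm ↥X} (hg : P w X g) (hh : P w X h) :
    P w X (g * h) := by
  constructor
  · intro z j
    rw [Equiv.Perm.mul_apply]
    exact (hh.1 z j).trans (hg.1 (h z) j)
  · intro x y a b hxa hxb hab hagree i hia hib
    have hya : OccAt w (↑y) a := occ_transfer hxa le_rfl hab.le hagree
    have hyb : OccAt w (↑y) b := occ_transfer hxb hab.le le_rfl hagree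
    rw [Equiv.Perm.mul_apply, Equiv.Perm.mul_apply]
    refine hg.2 (h x) (h y) a b ((hh.1 x a).mp hxa) ((hh.1 x b).mp hxb) hab ?_ i hia hib
    intro m hm1 hm2
    by_cases hmb : m < b
    · exact hh.2 x y a b hxa hxb hab hagree m hm1 hmb
    · push_neg at hmb
      rw [occ_eval ((hh.1 x b).mp hxb) hmb hm2, occ_eval ((hh.1 y b).mp hyb) hmb hm2]

lemma P_gen (hX : IsMinimalSubshift X) (h : shiftMap A '' X = X) {w : Fin n → A}
    {φ : Equiv.Perm ↥X} (hAutR : φ ∈ AutR X (n / 2))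
    (hmap : Set.MapsTo ⇑φ (cylinder X w) (cylinder X w)) : P w X φ := by
  obtain ⟨hAut, hbc, hbcsymm⟩ := hAutR
  obtain ⟨hcont, hcont', hcomm, hcomm'⟩ := aut_unpack hAut
  constructor
  · intro z j
    exact ⟨occ_fwd h hcomm hmap, occ_bwd hX h hcont hcomm hmap z j⟩
  · intro x y a b hxa hxb hab hagree i hia hib
    have hRn : ((n / 2 : ℕ) : ℤ) ≤ (n : ℤ) := by exact_mod_cast Nat.div_le_self n 2
    have hR0 : (0:ℤ) ≤ ((n / 2 : ℕ) : ℤ) := by positivity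
    by_cases hi : i < a + n
    · have hya : OccAt w (↑y) a := occ_transfer hxa le_rfl hab.le hagree
      rw [occ_eval (occ_fwd h hcomm hmap hxa) hia hi,
        occ_eval (occ_fwd h hcomm hmap hya) hia hi]
    · push_neg at hi
      apply blockcode_at h hcomm hbc x y i
      intro m hm1 hm2
      exact hagree m (by omega) (by omega)

lemma S_inv (hX : IsMinimalSubshift X) (h : shiftMap A '' X = X) {w : Fin n → A}
    {φ : Equiv.Perm ↥X} (hφ1 : φ ∈ AutR X (n / 2))
    (hφ2 : Set.MapsTo ⇑φ (cylinder X w) (cylinder X w)) :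
    φ⁻¹ ∈ AutR X (n / 2) ∧ Set.MapsTo ⇑φ⁻¹ (cylinder X w) (cylinder X w) := by
  obtain ⟨hAut, hbc, hbcs⟩ := hφ1
  have hinvAut : φ⁻¹ ∈ Aut X := (Aut X).inv_mem hAut
  have hcoe : ⇑φ⁻¹ = ⇑φ.symm := by rw [Equiv.Perm.inv_def]
  have hcoe2 : ⇑(φ⁻¹).symm = ⇑φ := by rw [Equiv.Perm.inv_def, Equiv.symm_symm]
  refine ⟨⟨hinvAut, ?_, ?_⟩, ?_⟩
  · rw [hcoe]; exact hbcs
  · rw [hcoe2]; exact hbc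
  · intro z hz
    obtain ⟨hcont, _, hcomm, _⟩ := aut_unpack hAut
    have h1 : OccAt w (↑(φ (φ⁻¹ z))) 0 := by
      rw [← Equiv.Perm.mul_apply, mul_inv_cancel, Equiv.Perm.one_apply]
      exact (mem_cylinder_iff w z).mp hz
    have h2 := occ_bwd hX h hcont hcomm hφ2 (φ⁻¹ z) 0 h1
    exact (mem_cylinder_iff w _).mpr h2

end Pred

end Stmt13Aux

open Stmt13Aux in
/-- For a minimal subshift and a word `w` in its language, the subgroup
of `Aut(X)` generated by `S_w = {φ ∈ Aut_{⌊|w|/2⌋}(X) : φ([w]₀⁺) ⊆ [w]₀⁺}` is finite. -/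
theorem stmt13 {A : Type*} [Fintype A] [TopologicalSpace A] [DiscreteTopology A]
    (X : Set (ℤ → A)) (hX : IsMinimalSubshift X) (n : ℕ) (w : Fin n → A)
    (hw : w ∈ Lang X n) :
    ((Subgroup.closure {φ : Equiv.Perm ↥X | φ ∈ AutR X (n / 2) ∧
        Set.MapsTo ⇑φ (cylinder X w) (cylinder X w)} : Subgroup (Equiv.Perm ↥X)) :
      Set (Equiv.Perm ↥X)).Finite := by
  classical
  have h : shiftMap A '' X = X := hX.1.2.2
  set S : Set (Equiv.Perm ↥X) := {φ : Equiv.Perm ↥X | φ ∈ AutR X (n / 2) ∧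
    Set.MapsTo ⇑φ (cylinder X w) (cylinder X w)} with hSdef
  -- every element of the closure satisfies the invariant `P`
  have hP : ∀ g ∈ Subgroup.closure S, P w X g ∧ P w X g⁻¹ := by
    intro g hg
    induction hg using Subgroup.closure_induction with
    | mem φ hφ =>
        exact ⟨P_gen hX h hφ.1 hφ.2,
          P_gen hX h (S_inv hX h hφ.1 hφ.2).1 (S_inv hX h hφ.1 hφ.2).2⟩
    | one =>
        refine ⟨P_one, ?_⟩
        rw [inv_one]
        exact P_one
    | mul x y hx hy hPx hPy =>
        refine ⟨P_mul hPx.1 hPy.1, ?_⟩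
        rw [mul_inv_rev]
        exact P_mul hPy.2 hPx.2
    | inv x hx hPx =>
        refine ⟨hPx.2, ?_⟩
        rw [inv_inv]
        exact hPx.1
  -- the closure consists of automorphisms (hence commutes with the shift)
  have hcl : Subgroup.closure S ≤ Aut X :=
    (Subgroup.closure_le (Aut X)).mpr (fun φ hφ => hφ.1.1)
  -- syndeticity of occurrences of `w`
  have hCylne : (cylinder X w).Nonempty := by
    obtain ⟨x, hxX, hxw⟩ := hw
    exact ⟨⟨x, hxX⟩, fun t => hxw t⟩
  obtain ⟨K, hK⟩ := synd hX h (cylinder X w) (cyl_open w) hCylne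
  have hOccK : ∀ z : ↥X, ∀ j : ℤ, ∃ a : ℤ, j ≤ a ∧ a ≤ j + K ∧ OccAt w (↑z) a := by
    intro z j
    obtain ⟨a, h1, h2, h3⟩ := hK z j
    exact ⟨a, h1, h2, (shifted_mem_cylinder_iff w h z a).mp h3⟩
  -- the injection into a finite type
  set L : ℕ := 2 * K + 2 + n with hLdef
  set F : {g : Equiv.Perm ↥X // g ∈ Subgroup.closure S} →
      ((Fin L → A) → Option (Fin L → A)) := fun g u =>
    if H : ∃ z : ↥X, (∀ t : Fin L, (z : ℤ → A) (t.val : ℤ) = u t) ∧ OccAt w (↑z) 0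
    then some (fun t => ((g.1 H.choose : ↥X) : ℤ → A) (t.val : ℤ))
    else none with hFdef
  have hFinj : Function.Injective F := by
    intro g g' hFg
    apply Subtype.ext
    apply Equiv.ext
    intro x
    apply Subtype.ext
    funext i
    obtain ⟨a, ha1, ha2, ha3⟩ := hOccK x (i - K)
    obtain ⟨b, hb1, hb2, hb3⟩ := hOccK x (i + 1)
    have hab : a ≤ i := by omega
    have hib : i < b := by omega
    set z : ↥X := (sX h ^ a) x with hzdef
    have hz0 : OccAt w (↑z) 0 := by
      rw [hzdef, occAt_shift w h a x 0, zero_add]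
      exact ha3
    have hzb : OccAt w (↑z) (b - a) := by
      rw [hzdef, occAt_shift w h a x (b - a)]
      have hba : b - a + a = b := by omega
      rw [hba]
      exact hb3
    have H : ∃ z' : ↥X, (∀ t : Fin L, (z' : ℤ → A) (t.val : ℤ)
        = (fun t : Fin L => (z : ℤ → A) (t.val : ℤ)) t) ∧ OccAt w (↑z') 0 :=
      ⟨z, fun t => rfl, hz0⟩
    have hFu := congrFun hFg (fun t : Fin L => (z : ℤ → A) (t.val : ℤ))
    rw [hFdef] at hFu
    simp only [dif_pos H] at hFu
    have heq : ∀ t : Fin L, ((g.1 H.choose : ↥X) : ℤ → A) (t.val : ℤ)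
        = ((g'.1 H.choose : ↥X) : ℤ → A) (t.val : ℤ) := by
      intro t
      exact congrFun (Option.some.inj hFu) t
    obtain ⟨hy1, hy2⟩ := H.choose_spec
    set y : ↥X := H.choose with hydef
    -- agreement between `z` and `y` on `[0, (b-a)+n)`
    have hagree : ∀ m : ℤ, 0 ≤ m → m < (b - a) + n → (z : ℤ → A) m = (y : ℤ → A) m := by
      intro m hm1 hm2
      have hmL : m < (L : ℤ) := by
        have hba : b - a ≤ 2 * K + 1 := by omega
        have : (L : ℤ) = 2 * K + 2 + n := by rw [hLdef]; push_cast; ring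
        omega
      have hcast : (((⟨m.toNat, by omega⟩ : Fin L).val : ℤ)) = m := by
        show ((m.toNat : ℤ)) = m
        omega
      have hym := hy1 ⟨m.toNat, by omega⟩
      simp only [] at hym
      rw [← hcast]
      exact hym.symm
    -- determinacy from the invariant
    have hcomm_g : CommutesWithShift X ⇑g.1 := (aut_unpack (hcl g.2)).2.2.1
    have hcomm_g' : CommutesWithShift X ⇑g'.1 := (aut_unpack (hcl g'.2)).2.2.1
    have hn0 : (0:ℤ) ≤ (n:ℤ) := by positivity
    have hd1 : ((g.1 z : ↥X) : ℤ → A) (i - a) = ((g.1 y : ↥X) : ℤ → A) (i - a) :=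
      (hP g.1 g.2).1.2 z y 0 (b - a) hz0 hzb (by omega) hagree (i - a) (by omega) (by omega)
    have hd2 : ((g'.1 z : ↥X) : ℤ → A) (i - a) = ((g'.1 y : ↥X) : ℤ → A) (i - a) :=
      (hP g'.1 g'.2).1.2 z y 0 (b - a) hz0 hzb (by omega) hagree (i - a) (by omega) (by omega)
    -- transport along the shift
    have he1 : ((g.1 x : ↥X) : ℤ → A) i = ((g.1 z : ↥X) : ℤ → A) (i - a) := by
      rw [hzdef, phi_sX_zpow h hcomm_g, sX_zpow_apply]
      have harith : i - a + a = i := by omega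
      rw [harith]
    have he2 : ((g'.1 x : ↥X) : ℤ → A) i = ((g'.1 z : ↥X) : ℤ → A) (i - a) := by
      rw [hzdef, phi_sX_zpow h hcomm_g', sX_zpow_apply]
      have harith : i - a + a = i := by omega
      rw [harith]
    -- evaluate `heq` at the appropriate index
    have hiaL : (i - a).toNat < L := by omega
    have hcast2 : (((⟨(i - a).toNat, hiaL⟩ : Fin L).val : ℤ)) = i - a := by
      show (((i - a).toNat : ℤ)) = i - a
      omega
    have heq' : ((g.1 y : ↥X) : ℤ → A) (i - a) = ((g'.1 y : ↥X) : ℤ → A) (i - a) := by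
      have := heq ⟨(i - a).toNat, hiaL⟩
      rwa [hcast2] at this
    rw [he1, he2, hd1, hd2, heq']
  haveI : Finite {g : Equiv.Perm ↥X // g ∈ Subgroup.closure S} :=
    Finite.of_injective F hFinj
  exact Set.toFinite _
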